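/- Define ρ : [0,1]² → [0,1]² by ρ(x,y) = (max(x−y,0), max(y−x,0)), and let L = ({0} × [0,1]) ∪ ([0,1] × {0}). Then ρ is a Z-retraction of [0,1]² with range L, and the set of Z-homeomorphism domains for ρ is infinite; consequently the set of retractions of McN([0,1]²) onto A_ρ is infinite. -/

import Mathlib

open Set MeasureTheory

/-- The unit cube `[0,1]^n` in `ℝ^n`. -/
def cubeSet (n : ℕ) : Set (Fin n → ℝ) := Set.Icc 0 1

/-- A point all of whose coordinates are rational. -/
def IsRationalPoint {n : ℕ} (v : Fin n → ℝ) : Prop := ∀ i, ∃ q : ℚ, v i = (q : ℝ)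

/-- A rational polyhedron: a finite union of convex hulls of finite sets of rational points. -/
def IsRationalPolyhedron {n : ℕ} (P : Set (Fin n → ℝ)) : Prop :=
  ∃ S : Finset (Finset (Fin n → ℝ)),
    (∀ F ∈ S, ∀ v ∈ F, IsRationalPoint v) ∧
    P = ⋃ F ∈ S, convexHull ℝ (F : Set (Fin n → ℝ))

/-- An affine map `x ↦ Mx + b` with integer matrix `M` and integer vector `b`. -/
def IsIntAffine {n m : ℕ} (g : (Fin n → ℝ) → (Fin m → ℝ)) : Prop :=
  ∃ (M : Fin m → Fin n → ℤ) (b : Fin m → ℤ),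
    ∀ x i, g x i = (∑ j, (M i j : ℝ) * x j) + (b i : ℝ)

/-- A Z-map on `P`: continuous on `P`, with finitely many integer affine pieces. -/
def IsZMapOn {n m : ℕ} (P : Set (Fin n → ℝ)) (f : (Fin n → ℝ) → (Fin m → ℝ)) : Prop :=
  ContinuousOn f P ∧
  ∃ (k : ℕ) (g : Fin k → (Fin n → ℝ) → (Fin m → ℝ)),
    (∀ i, IsIntAffine (g i)) ∧ ∀ x ∈ P, ∃ i, f x = g i x

/-- `f` restricted to `P` is a Z-homeomorphism of `P` onto `Q`. -/
def IsZHomeoOnto {n m : ℕ} (P : Set (Fin n → ℝ)) (Q : Set (Fin m → ℝ))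
    (f : (Fin n → ℝ) → (Fin m → ℝ)) : Prop :=
  IsZMapOn P f ∧ f '' P = Q ∧ Set.InjOn f P ∧
  ∃ g : (Fin m → ℝ) → (Fin n → ℝ),
    IsZMapOn Q g ∧ (∀ x ∈ P, g (f x) = x) ∧ (∀ y ∈ Q, f (g y) = y)

/-- A Z-retraction of the cube `[0,1]^n`. -/
def IsZRetraction {n : ℕ} (σ : (Fin n → ℝ) → (Fin n → ℝ)) : Prop :=
  IsZMapOn (cubeSet n) σ ∧ Set.MapsTo σ (cubeSet n) (cubeSet n) ∧
  ∀ x ∈ cubeSet n, σ (σ x) = σ x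

/-- The range `R_σ = σ([0,1]^n)` of a Z-retraction. -/
def zRange {n : ℕ} (σ : (Fin n → ℝ) → (Fin n → ℝ)) : Set (Fin n → ℝ) := σ '' cubeSet n

/-- A Z-homeomorphism domain for `σ`: a rational polyhedron `Q ⊆ [0,1]^n` such that
`σ` restricted to `Q` is a Z-homeomorphism of `Q` onto `R_σ`. -/
def IsZHomeoDomain {n : ℕ} (σ : (Fin n → ℝ) → (Fin n → ℝ)) (Q : Set (Fin n → ℝ)) : Prop :=
  IsRationalPolyhedron Q ∧ Q ⊆ cubeSet n ∧ IsZHomeoOnto Q (zRange σ) σ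

/-- A (Kuratowski) closed domain: `D` equals the closure of its interior. -/
def IsClosedDomain {n : ℕ} (D : Set (Fin n → ℝ)) : Prop :=
  closure (interior D) = D

/-- A scalar integer affine map. -/
def IsIntAffine1 {n : ℕ} (g : (Fin n → ℝ) → ℝ) : Prop :=
  ∃ (m : Fin n → ℤ) (b : ℤ), ∀ x, g x = (∑ j, (m j : ℝ) * x j) + (b : ℝ)

/-- A scalar Z-map on `P`. -/
def IsZMapOn1 {n : ℕ} (P : Set (Fin n → ℝ)) (f : (Fin n → ℝ) → ℝ) : Prop :=
  ContinuousOn f P ∧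
  ∃ (k : ℕ) (g : Fin k → (Fin n → ℝ) → ℝ),
    (∀ i, IsIntAffine1 (g i)) ∧ ∀ x ∈ P, ∃ i, f x = g i x

/-- The free MV-algebra `McN([0,1]^n)`, viewed as a set of functions on the cube. -/
def McN (n : ℕ) : Set (↥(cubeSet n) → ℝ) :=
  { f | (∀ x, f x ∈ Set.Icc (0:ℝ) 1) ∧
    ∃ g : (Fin n → ℝ) → ℝ, IsZMapOn1 (cubeSet n) g ∧ ∀ x : ↥(cubeSet n), f x = g x.1 }

/-- Pointwise MV-sum `f ⊕ g = min(f + g, 1)`. -/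
def mvAdd {X : Type*} (f g : X → ℝ) : X → ℝ := fun x => min (f x + g x) 1

/-- Pointwise MV-negation `¬f = 1 - f`. -/
def mvNeg {X : Type*} (f : X → ℝ) : X → ℝ := fun x => 1 - f x

/-- The retract `A_σ = {g ∘ σ : g ∈ McN([0,1]^n)}` associated with a Z-retraction `σ`. -/
def retAlg {n : ℕ} (σ : (Fin n → ℝ) → (Fin n → ℝ)) : Set (↥(cubeSet n) → ℝ) :=
  { f | ∃ g ∈ McN n, ∀ (x : ↥(cubeSet n)) (h : σ x.1 ∈ cubeSet n), f x = g ⟨σ x.1, h⟩ }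

/-- `ε` is a retraction of `McN([0,1]^n)` onto `A`. -/
def IsMcNRetraction {n : ℕ} (ε : ↥(McN n) → ↥(McN n)) (A : Set (↥(cubeSet n) → ℝ)) : Prop :=
  (∀ (f g : ↥(McN n)) (h : mvAdd f.1 g.1 ∈ McN n),
      (ε ⟨mvAdd f.1 g.1, h⟩).1 = mvAdd (ε f).1 (ε g).1) ∧
  (∀ (f : ↥(McN n)) (h : mvNeg f.1 ∈ McN n),
      (ε ⟨mvNeg f.1, h⟩).1 = mvNeg (ε f).1) ∧
  (∀ f, ε (ε f) = ε f) ∧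
  Subtype.val '' Set.range ε = A

/-- An MV-isomorphism between two sets of `[0,1]`-valued functions. -/
def IsMVIsoFun {X Y : Type*} (A : Set (X → ℝ)) (B : Set (Y → ℝ)) (h : ↥A → ↥B) : Prop :=
  Function.Bijective h ∧
  (∀ (f g : ↥A) (hm : mvAdd f.1 g.1 ∈ A),
      (h ⟨mvAdd f.1 g.1, hm⟩).1 = mvAdd (h f).1 (h g).1) ∧
  (∀ (f : ↥A) (hm : mvNeg f.1 ∈ A),
      (h ⟨mvNeg f.1, hm⟩).1 = mvNeg (h f).1)

/-- `ρ(x,y) = (max(x-y,0), max(y-x,0))`. -/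
def rho11 : (Fin 2 → ℝ) → (Fin 2 → ℝ) := fun v => ![max (v 0 - v 1) 0, max (v 1 - v 0) 0]

/-- `L = ({0} × [0,1]) ∪ ([0,1] × {0})`. -/
def Lset : Set (Fin 2 → ℝ) :=
  {v | (v 0 = 0 ∧ 0 ≤ v 1 ∧ v 1 ≤ 1) ∨ (v 1 = 0 ∧ 0 ≤ v 0 ∧ v 0 ≤ 1)}

section Aux
open Set

lemma mem_cube_iff {x : Fin 2 → ℝ} :
    x ∈ cubeSet 2 ↔ (0 ≤ x 0 ∧ x 0 ≤ 1) ∧ (0 ≤ x 1 ∧ x 1 ≤ 1) := by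
  simp only [cubeSet, Set.mem_Icc, Pi.le_def, Fin.forall_fin_two, Pi.zero_apply, Pi.one_apply]
  tauto

lemma rho_apply0 (v : Fin 2 → ℝ) : rho11 v 0 = max (v 0 - v 1) 0 := rfl
lemma rho_apply1 (v : Fin 2 → ℝ) : rho11 v 1 = max (v 1 - v 0) 0 := rfl

noncomputable def secmap (m : ℕ) : (Fin 2 → ℝ) → (Fin 2 → ℝ) :=
  fun v => ![v 0 + max (1 - (m:ℝ) * (v 0 + v 1)) 0, v 1 + max (1 - (m:ℝ) * (v 0 + v 1)) 0]

lemma sec_apply0 (m : ℕ) (v : Fin 2 → ℝ) :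
    secmap m v 0 = v 0 + max (1 - (m:ℝ) * (v 0 + v 1)) 0 := rfl
lemma sec_apply1 (m : ℕ) (v : Fin 2 → ℝ) :
    secmap m v 1 = v 1 + max (1 - (m:ℝ) * (v 0 + v 1)) 0 := rfl

lemma cont_vec2 {f g : (Fin 2 → ℝ) → ℝ} (hf : Continuous f) (hg : Continuous g) :
    Continuous fun v => ![f v, g v] := by
  apply continuous_pi; intro i; fin_cases i
  · simpa using hf
  · simpa using hg

lemma rho_cont : Continuous rho11 := cont_vec2 (by fun_prop) (by fun_prop)

lemma sec_cont (m : ℕ) : Continuous (secmap m) := cont_vec2 (by fun_prop) (by fun_prop)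

lemma rho_maps : Set.MapsTo rho11 (cubeSet 2) (cubeSet 2) := by
  intro x hx
  obtain ⟨⟨h00, h01⟩, h10, h11⟩ := mem_cube_iff.1 hx
  rw [mem_cube_iff, rho_apply0, rho_apply1]
  exact ⟨⟨le_max_right _ _, max_le (by linarith) (by linarith)⟩,
    le_max_right _ _, max_le (by linarith) (by linarith)⟩

lemma rho_mem_L {x : Fin 2 → ℝ} (hx : x ∈ cubeSet 2) : rho11 x ∈ Lset := by
  obtain ⟨⟨h00, h01⟩, h10, h11⟩ := mem_cube_iff.1 hx
  rcases le_total (x 1) (x 0) with h | h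
  · exact Or.inr ⟨by rw [rho_apply1]; exact max_eq_right (by linarith),
      by rw [rho_apply0]; exact le_max_right _ _,
      by rw [rho_apply0]; exact max_le (by linarith) (by linarith)⟩
  · exact Or.inl ⟨by rw [rho_apply0]; exact max_eq_right (by linarith),
      by rw [rho_apply1]; exact le_max_right _ _,
      by rw [rho_apply1]; exact max_le (by linarith) (by linarith)⟩

lemma rho_fix {v : Fin 2 → ℝ} (hv : v ∈ Lset) : rho11 v = v := by
  funext i; fin_cases i
  · show max (v 0 - v 1) 0 = v 0
    rcases hv with ⟨h0, h1, _⟩ | ⟨h1, h0, _⟩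
    · rw [h0]; exact max_eq_right (by linarith)
    · rw [h1, sub_zero]; exact max_eq_left (by linarith)
  · show max (v 1 - v 0) 0 = v 1
    rcases hv with ⟨h0, h1, _⟩ | ⟨h1, h0, _⟩
    · rw [h0, sub_zero]; exact max_eq_left (by linarith)
    · rw [h1]; exact max_eq_right (by linarith)

lemma L_sub_cube : Lset ⊆ cubeSet 2 := by
  intro v hv
  rcases hv with ⟨h0, h1, h2⟩ | ⟨h1, h0, h2⟩ <;> rw [mem_cube_iff] <;>
    constructor <;> constructor <;> linarith

lemma rho_sec {m : ℕ} {v : Fin 2 → ℝ} (hv : v ∈ Lset) : rho11 (secmap m v) = v := by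
  have h01 : secmap m v 0 - secmap m v 1 = v 0 - v 1 := by
    rw [sec_apply0, sec_apply1]; ring
  have h10 : secmap m v 1 - secmap m v 0 = v 1 - v 0 := by
    rw [sec_apply0, sec_apply1]; ring
  funext i; fin_cases i
  · show max (secmap m v 0 - secmap m v 1) 0 = v 0
    rw [h01]
    rcases hv with ⟨h0, hb, _⟩ | ⟨h1, ha, _⟩
    · rw [h0]; exact max_eq_right (by linarith)
    · rw [h1, sub_zero]; exact max_eq_left (by linarith)
  · show max (secmap m v 1 - secmap m v 0) 0 = v 1
    rw [h10]
    rcases hv with ⟨h0, hb, _⟩ | ⟨h1, ha, _⟩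
    · rw [h0, sub_zero]; exact max_eq_left (by linarith)
    · rw [h1]; exact max_eq_right (by linarith)

lemma sec_maps {m : ℕ} (hm : 1 ≤ m) : Set.MapsTo (secmap m) (cubeSet 2) (cubeSet 2) := by
  intro x hx
  obtain ⟨⟨h00, h01⟩, h10, h11⟩ := mem_cube_iff.1 hx
  have hm1 : (1:ℝ) ≤ (m:ℝ) := by exact_mod_cast hm
  rw [mem_cube_iff, sec_apply0, sec_apply1]
  rcases le_total (1 - (m:ℝ) * (x 0 + x 1)) 0 with h | h
  · rw [max_eq_right h]
    exact ⟨⟨by linarith, by linarith⟩, by linarith, by linarith⟩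
  · rw [max_eq_left h]
    have hx0 : (m:ℝ) * x 0 ≤ (m:ℝ) * (x 0 + x 1) := by nlinarith
    have hx1 : (m:ℝ) * x 1 ≤ (m:ℝ) * (x 0 + x 1) := by nlinarith
    have e0 : x 0 ≤ (m:ℝ) * x 0 := by nlinarith
    have e1 : x 1 ≤ (m:ℝ) * x 1 := by nlinarith
    exact ⟨⟨by linarith, by linarith⟩, by linarith, by linarith⟩

end Aux
section Aux2
open Set

lemma rho_zmap (P : Set (Fin 2 → ℝ)) : IsZMapOn P rho11 := by
  refine ⟨rho_cont.continuousOn, 2,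
    ![fun v => ![v 0 - v 1, 0], fun v => ![0, v 1 - v 0]], ?_, ?_⟩
  · intro i; fin_cases i
    · exact ⟨![![1,-1],![0,0]], 0, by intro x i; fin_cases i <;>
        norm_num [Fin.sum_univ_two] <;> ring⟩
    · exact ⟨![![0,0],![-1,1]], 0, by intro x i; fin_cases i <;>
        norm_num [Fin.sum_univ_two] <;> ring⟩
  · intro x _
    rcases le_total (x 1) (x 0) with h | h
    · refine ⟨0, ?_⟩
      funext i; fin_cases i
      · show max (x 0 - x 1) 0 = _
        simp [max_eq_left (by linarith : (0:ℝ) ≤ x 0 - x 1)]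
      · show max (x 1 - x 0) 0 = _
        simp [max_eq_right (by linarith : x 1 - x 0 ≤ 0)]
    · refine ⟨1, ?_⟩
      funext i; fin_cases i
      · show max (x 0 - x 1) 0 = _
        simp [max_eq_right (by linarith : x 0 - x 1 ≤ 0)]
      · show max (x 1 - x 0) 0 = _
        simp [max_eq_left (by linarith : (0:ℝ) ≤ x 1 - x 0)]

lemma sec_zmap (m : ℕ) (P : Set (Fin 2 → ℝ)) : IsZMapOn P (secmap m) := by
  refine ⟨(sec_cont m).continuousOn, 2,
    ![fun v => ![v 0, v 1],
      fun v => ![v 0 + (1 - (m:ℝ) * (v 0 + v 1)), v 1 + (1 - (m:ℝ) * (v 0 + v 1))]], ?_, ?_⟩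
  · intro i; fin_cases i
    · exact ⟨![![1,0],![0,1]], 0, by intro x i; fin_cases i <;>
        norm_num [Fin.sum_univ_two]⟩
    · exact ⟨![![1-(m:ℤ),-(m:ℤ)],![-(m:ℤ),1-(m:ℤ)]], ![1,1], by intro x i; fin_cases i <;>
        push_cast <;> norm_num [Fin.sum_univ_two] <;> ring⟩
  · intro x _
    rcases le_total (1 - (m:ℝ) * (x 0 + x 1)) 0 with h | h
    · refine ⟨0, ?_⟩
      funext i; fin_cases i
      · show x 0 + max (1 - (m:ℝ) * (x 0 + x 1)) 0 = _
        simp [max_eq_right h]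
      · show x 1 + max (1 - (m:ℝ) * (x 0 + x 1)) 0 = _
        simp [max_eq_right h]
    · refine ⟨1, ?_⟩
      funext i; fin_cases i
      · show x 0 + max (1 - (m:ℝ) * (x 0 + x 1)) 0 = _
        simp [max_eq_left h]
      · show x 1 + max (1 - (m:ℝ) * (x 0 + x 1)) 0 = _
        simp [max_eq_left h]

lemma intAffine1_comp {n : ℕ} {g : (Fin n → ℝ) → ℝ} {h : (Fin n → ℝ) → (Fin n → ℝ)}
    (hg : IsIntAffine1 g) (hh : IsIntAffine h) : IsIntAffine1 (fun x => g (h x)) := by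
  obtain ⟨c, b, hgb⟩ := hg
  obtain ⟨M, d, hMd⟩ := hh
  refine ⟨fun l => ∑ j, c j * M j l, b + ∑ j, c j * d j, fun x => ?_⟩
  simp only [hgb, hMd]
  push_cast
  simp only [mul_add, Finset.mul_sum, Finset.sum_add_distrib, Finset.sum_mul, mul_assoc]
  rw [Finset.sum_comm]
  ring

lemma zcomp1 {g : (Fin 2 → ℝ) → ℝ} {h : (Fin 2 → ℝ) → (Fin 2 → ℝ)}
    (hg : IsZMapOn1 (cubeSet 2) g) (hh : IsZMapOn (cubeSet 2) h)
    (hmap : Set.MapsTo h (cubeSet 2) (cubeSet 2)) :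
    IsZMapOn1 (cubeSet 2) (fun x => g (h x)) := by
  obtain ⟨hgc, kg, G, hGaff, hGcov⟩ := hg
  obtain ⟨hhc, kh, H, hHaff, hHcov⟩ := hh
  refine ⟨hgc.comp hhc hmap, kg * kh,
    fun i x => G (finProdFinEquiv.symm i).1 (H (finProdFinEquiv.symm i).2 x),
    fun i => intAffine1_comp (hGaff _) (hHaff _), fun x hx => ?_⟩
  obtain ⟨j, hj⟩ := hHcov x hx
  obtain ⟨i, hi⟩ := hGcov (h x) (hmap hx)
  refine ⟨finProdFinEquiv (i, j), ?_⟩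
  simp only [Equiv.symm_apply_apply]
  rw [← hj, ← hi]

end Aux2
section Aux3
open Set

lemma zRange_rho : zRange rho11 = Lset := by
  apply Set.Subset.antisymm
  · rintro _ ⟨x, hx, rfl⟩; exact rho_mem_L hx
  · intro v hv; exact ⟨v, L_sub_cube hv, rho_fix hv⟩

def Qm (m : ℕ) : Set (Fin 2 → ℝ) := secmap m '' Lset

def p11 : Fin 2 → ℝ := ![1,1]
noncomputable def pA (m : ℕ) : Fin 2 → ℝ := ![1/(m:ℝ), 0]
noncomputable def pB (m : ℕ) : Fin 2 → ℝ := ![0, 1/(m:ℝ)]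
def p10 : Fin 2 → ℝ := ![1,0]
def p01 : Fin 2 → ℝ := ![0,1]

lemma memL_A {a : ℝ} (h0 : 0 ≤ a) (h1 : a ≤ 1) : ![a, 0] ∈ Lset := by
  right; refine ⟨rfl, ?_, ?_⟩ <;> simpa
lemma memL_B {b : ℝ} (h0 : 0 ≤ b) (h1 : b ≤ 1) : ![(0:ℝ), b] ∈ Lset := by
  left; refine ⟨rfl, ?_, ?_⟩ <;> simpa

lemma funext2 {x y : Fin 2 → ℝ} (h0 : x 0 = y 0) (h1 : x 1 = y 1) : x = y := by
  funext i; fin_cases i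
  · exact h0
  · exact h1

lemma Qm_eq (m : ℕ) (hm : 1 ≤ m) :
    Qm m = (segment ℝ p11 (pA m) ∪ segment ℝ (pA m) p10) ∪
      (segment ℝ p11 (pB m) ∪ segment ℝ (pB m) p01) := by
  have hm0 : (0:ℝ) < (m:ℝ) := by exact_mod_cast Nat.lt_of_lt_of_le Nat.zero_lt_one hm
  have hm0' : (m:ℝ) ≠ 0 := ne_of_gt hm0
  have hm1 : (1:ℝ) ≤ (m:ℝ) := by exact_mod_cast hm
  simp only [segment_eq_image]
  ext x
  simp only [Set.mem_union, Set.mem_image, Set.mem_Icc]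
  constructor
  · rintro ⟨v, hv, rfl⟩
    rcases hv with ⟨h0, hb0, hb1⟩ | ⟨h1, ha0, ha1⟩
    · -- arm B : v 0 = 0
      rcases le_total ((m:ℝ) * v 1) 1 with h | h
      · refine Or.inr (Or.inl ⟨(m:ℝ) * v 1, ⟨by positivity, h⟩, ?_⟩)
        have hmax : max (1 - (m:ℝ) * (v 0 + v 1)) 0 = 1 - (m:ℝ) * (v 0 + v 1) :=
          max_eq_left (by rw [h0]; linarith)
        refine funext2 ?_ ?_
        · show (1 - (m:ℝ) * v 1) * 1 + (m:ℝ) * v 1 * 0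
            = v 0 + max (1 - (m:ℝ) * (v 0 + v 1)) 0
          rw [hmax, h0]; ring
        · show (1 - (m:ℝ) * v 1) * 1 + (m:ℝ) * v 1 * (1/(m:ℝ))
            = v 1 + max (1 - (m:ℝ) * (v 0 + v 1)) 0
          rw [hmax, h0]; field_simp; ring
      · have hmax : max (1 - (m:ℝ) * (v 0 + v 1)) 0 = 0 :=
          max_eq_right (by rw [h0]; linarith)
        rcases eq_or_lt_of_le hm1 with he | hlt
        · have hv1 : v 1 = 1 := le_antisymm hb1 (by nlinarith [h, he.symm])
          refine Or.inr (Or.inr ⟨1, ⟨zero_le_one, le_refl 1⟩, ?_⟩)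
          refine funext2 ?_ ?_
          · show (1 - (1:ℝ)) * 0 + 1 * 0 = v 0 + max (1 - (m:ℝ) * (v 0 + v 1)) 0
            rw [hmax, h0]; ring
          · show (1 - (1:ℝ)) * (1/(m:ℝ)) + 1 * 1 = v 1 + max (1 - (m:ℝ) * (v 0 + v 1)) 0
            rw [hmax, hv1]; ring
        · have hne : (m:ℝ) - 1 ≠ 0 := ne_of_gt (by linarith)
          refine Or.inr (Or.inr ⟨((m:ℝ) * v 1 - 1)/((m:ℝ) - 1), ⟨?_, ?_⟩, ?_⟩)
          · exact div_nonneg (by linarith) (by linarith)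
          · rw [div_le_one (by linarith)]; nlinarith
          · refine funext2 ?_ ?_
            · show (1 - ((m:ℝ) * v 1 - 1)/((m:ℝ) - 1)) * 0 + ((m:ℝ) * v 1 - 1)/((m:ℝ) - 1) * 0
                = v 0 + max (1 - (m:ℝ) * (v 0 + v 1)) 0
              rw [hmax, h0]; ring
            · show (1 - ((m:ℝ) * v 1 - 1)/((m:ℝ) - 1)) * (1/(m:ℝ))
                  + ((m:ℝ) * v 1 - 1)/((m:ℝ) - 1) * 1
                = v 1 + max (1 - (m:ℝ) * (v 0 + v 1)) 0
              rw [hmax]; field_simp; ring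
    · -- arm A : v 1 = 0
      rcases le_total ((m:ℝ) * v 0) 1 with h | h
      · refine Or.inl (Or.inl ⟨(m:ℝ) * v 0, ⟨by positivity, h⟩, ?_⟩)
        have hmax : max (1 - (m:ℝ) * (v 0 + v 1)) 0 = 1 - (m:ℝ) * (v 0 + v 1) :=
          max_eq_left (by rw [h1]; linarith)
        refine funext2 ?_ ?_
        · show (1 - (m:ℝ) * v 0) * 1 + (m:ℝ) * v 0 * (1/(m:ℝ))
            = v 0 + max (1 - (m:ℝ) * (v 0 + v 1)) 0
          rw [hmax, h1]; field_simp; ring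
        · show (1 - (m:ℝ) * v 0) * 1 + (m:ℝ) * v 0 * 0
            = v 1 + max (1 - (m:ℝ) * (v 0 + v 1)) 0
          rw [hmax, h1]; ring
      · have hmax : max (1 - (m:ℝ) * (v 0 + v 1)) 0 = 0 :=
          max_eq_right (by rw [h1]; linarith)
        rcases eq_or_lt_of_le hm1 with he | hlt
        · have hv0 : v 0 = 1 := le_antisymm ha1 (by nlinarith [h, he.symm])
          refine Or.inl (Or.inr ⟨1, ⟨zero_le_one, le_refl 1⟩, ?_⟩)
          refine funext2 ?_ ?_
          · show (1 - (1:ℝ)) * (1/(m:ℝ)) + 1 * 1 = v 0 + max (1 - (m:ℝ) * (v 0 + v 1)) 0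
            rw [hmax, hv0]; ring
          · show (1 - (1:ℝ)) * 0 + 1 * 0 = v 1 + max (1 - (m:ℝ) * (v 0 + v 1)) 0
            rw [hmax, h1]; ring
        · have hne : (m:ℝ) - 1 ≠ 0 := ne_of_gt (by linarith)
          refine Or.inl (Or.inr ⟨((m:ℝ) * v 0 - 1)/((m:ℝ) - 1), ⟨?_, ?_⟩, ?_⟩)
          · exact div_nonneg (by linarith) (by linarith)
          · rw [div_le_one (by linarith)]; nlinarith
          · refine funext2 ?_ ?_
            · show (1 - ((m:ℝ) * v 0 - 1)/((m:ℝ) - 1)) * (1/(m:ℝ))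
                  + ((m:ℝ) * v 0 - 1)/((m:ℝ) - 1) * 1
                = v 0 + max (1 - (m:ℝ) * (v 0 + v 1)) 0
              rw [hmax]; field_simp; ring
            · show (1 - ((m:ℝ) * v 0 - 1)/((m:ℝ) - 1)) * 0 + ((m:ℝ) * v 0 - 1)/((m:ℝ) - 1) * 0
                = v 1 + max (1 - (m:ℝ) * (v 0 + v 1)) 0
              rw [hmax, h1]; ring
  · have hinv0 : (0:ℝ) ≤ 1/(m:ℝ) := by positivity
    have hinv1 : 1/(m:ℝ) ≤ 1 := by rw [div_le_one hm0]; linarith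
    rintro ((⟨t, ⟨ht0, ht1⟩, rfl⟩ | ⟨t, ⟨ht0, ht1⟩, rfl⟩) |
      (⟨t, ⟨ht0, ht1⟩, rfl⟩ | ⟨t, ⟨ht0, ht1⟩, rfl⟩))
    · -- segment p11 pA
      refine ⟨![t/(m:ℝ), 0], memL_A (by positivity) (by rw [div_le_one hm0]; linarith), ?_⟩
      have hmax : max (1 - (m:ℝ) * (t/(m:ℝ) + 0)) 0 = 1 - (m:ℝ) * (t/(m:ℝ) + 0) := by
        apply max_eq_left
        rw [add_zero, mul_div_cancel₀ _ hm0']; linarith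
      refine funext2 ?_ ?_
      · show t/(m:ℝ) + max (1 - (m:ℝ) * (t/(m:ℝ) + 0)) 0 = (1 - t) * 1 + t * (1/(m:ℝ))
        rw [hmax]; field_simp; ring
      · show 0 + max (1 - (m:ℝ) * (t/(m:ℝ) + 0)) 0 = (1 - t) * 1 + t * 0
        rw [hmax]; field_simp; ring
    · -- segment pA p10
      have hge : (0:ℝ) ≤ (1-t) * (1/(m:ℝ)) + t :=
        add_nonneg (mul_nonneg (by linarith) hinv0) ht0
      have hle : (1-t) * (1/(m:ℝ)) + t ≤ 1 := by nlinarith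
      refine ⟨![(1-t) * (1/(m:ℝ)) + t, 0], memL_A hge hle, ?_⟩
      have hmax : max (1 - (m:ℝ) * (((1-t) * (1/(m:ℝ)) + t) + 0)) 0 = 0 := by
        apply max_eq_right
        have hh : (m:ℝ) * (((1-t) * (1/(m:ℝ)) + t) + 0) = (1-t) + (m:ℝ)*t := by
          field_simp; ring
        rw [hh]; nlinarith
      refine funext2 ?_ ?_
      · show ((1-t) * (1/(m:ℝ)) + t) + max (1 - (m:ℝ) * (((1-t) * (1/(m:ℝ)) + t) + 0)) 0
          = (1 - t) * (1/(m:ℝ)) + t * 1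
        rw [hmax]; ring
      · show 0 + max (1 - (m:ℝ) * (((1-t) * (1/(m:ℝ)) + t) + 0)) 0 = (1 - t) * 0 + t * 0
        rw [hmax]; ring
    · -- segment p11 pB
      refine ⟨![(0:ℝ), t/(m:ℝ)], memL_B (by positivity) (by rw [div_le_one hm0]; linarith), ?_⟩
      have hmax : max (1 - (m:ℝ) * (0 + t/(m:ℝ))) 0 = 1 - (m:ℝ) * (0 + t/(m:ℝ)) := by
        apply max_eq_left
        rw [zero_add, mul_div_cancel₀ _ hm0']; linarith
      refine funext2 ?_ ?_
      · show 0 + max (1 - (m:ℝ) * (0 + t/(m:ℝ))) 0 = (1 - t) * 1 + t * 0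
        rw [hmax]; field_simp; ring
      · show t/(m:ℝ) + max (1 - (m:ℝ) * (0 + t/(m:ℝ))) 0 = (1 - t) * 1 + t * (1/(m:ℝ))
        rw [hmax]; field_simp; ring
    · -- segment pB p01
      have hge : (0:ℝ) ≤ (1-t) * (1/(m:ℝ)) + t :=
        add_nonneg (mul_nonneg (by linarith) hinv0) ht0
      have hle : (1-t) * (1/(m:ℝ)) + t ≤ 1 := by nlinarith
      refine ⟨![(0:ℝ), (1-t) * (1/(m:ℝ)) + t], memL_B hge hle, ?_⟩
      have hmax : max (1 - (m:ℝ) * (0 + ((1-t) * (1/(m:ℝ)) + t))) 0 = 0 := by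
        apply max_eq_right
        have hh : (m:ℝ) * (0 + ((1-t) * (1/(m:ℝ)) + t)) = (1-t) + (m:ℝ)*t := by
          field_simp; ring
        rw [hh]; nlinarith
      refine funext2 ?_ ?_
      · show 0 + max (1 - (m:ℝ) * (0 + ((1-t) * (1/(m:ℝ)) + t))) 0 = (1 - t) * 0 + t * 0
        rw [hmax]; ring
      · show ((1-t) * (1/(m:ℝ)) + t) + max (1 - (m:ℝ) * (0 + ((1-t) * (1/(m:ℝ)) + t))) 0
          = (1 - t) * (1/(m:ℝ)) + t * 1
        rw [hmax]; ring

end Aux3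
section Aux4
open Set

lemma ratpoint_vec {a b : ℚ} : IsRationalPoint ![(a:ℝ), (b:ℝ)] := by
  intro i; fin_cases i
  · exact ⟨a, rfl⟩
  · exact ⟨b, rfl⟩

lemma Qm_poly (m : ℕ) (hm : 1 ≤ m) : IsRationalPolyhedron (Qm m) := by
  classical
  have hcast : ((1/(m:ℚ) : ℚ) : ℝ) = 1/(m:ℝ) := by push_cast; ring
  have hA : pA m = ![((1/(m:ℚ) : ℚ) : ℝ), ((0:ℚ) : ℝ)] := by
    refine funext2 ?_ ?_ <;> simp [pA, hcast]
  have hB : pB m = ![((0:ℚ) : ℝ), ((1/(m:ℚ) : ℚ) : ℝ)] := by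
    refine funext2 ?_ ?_ <;> simp [pB, hcast]
  have h11 : p11 = ![((1:ℚ) : ℝ), ((1:ℚ) : ℝ)] := by
    refine funext2 ?_ ?_ <;> simp [p11]
  have h10 : p10 = ![((1:ℚ) : ℝ), ((0:ℚ) : ℝ)] := by
    refine funext2 ?_ ?_ <;> simp [p10]
  have h01 : p01 = ![((0:ℚ) : ℝ), ((1:ℚ) : ℝ)] := by
    refine funext2 ?_ ?_ <;> simp [p01]
  refine ⟨{{p11, pA m}, {pA m, p10}, {p11, pB m}, {pB m, p01}}, ?_, ?_⟩
  · intro F hF v hv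
    simp only [Finset.mem_insert, Finset.mem_singleton] at hF
    rcases hF with rfl | rfl | rfl | rfl <;>
      simp only [Finset.mem_insert, Finset.mem_singleton] at hv <;>
      rcases hv with rfl | rfl <;>
      first
        | (rw [hA]; exact ratpoint_vec)
        | (rw [hB]; exact ratpoint_vec)
        | (rw [h11]; exact ratpoint_vec)
        | (rw [h10]; exact ratpoint_vec)
        | (rw [h01]; exact ratpoint_vec)
  · rw [Qm_eq m hm]
    rw [show (⋃ F ∈ ({{p11, pA m}, {pA m, p10}, {p11, pB m}, {pB m, p01}} :
        Finset (Finset (Fin 2 → ℝ))), convexHull ℝ (F : Set (Fin 2 → ℝ)))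
      = convexHull ℝ ({p11, pA m} : Set (Fin 2 → ℝ)) ∪
        (convexHull ℝ ({pA m, p10} : Set (Fin 2 → ℝ)) ∪
        (convexHull ℝ ({p11, pB m} : Set (Fin 2 → ℝ)) ∪
         convexHull ℝ ({pB m, p01} : Set (Fin 2 → ℝ)))) from by
      simp [Finset.set_biUnion_insert]]
    simp only [convexHull_pair]
    rw [Set.union_assoc]

lemma Qm_domain (m : ℕ) (hm : 1 ≤ m) : IsZHomeoDomain rho11 (Qm m) := by
  refine ⟨Qm_poly m hm, ?_, ?_⟩
  · rintro _ ⟨v, hv, rfl⟩; exact sec_maps hm (L_sub_cube hv)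
  · rw [zRange_rho]
    refine ⟨rho_zmap _, ?_, ?_, secmap m, sec_zmap m _, ?_, ?_⟩
    · show rho11 '' (secmap m '' Lset) = Lset
      rw [Set.image_image]
      have : (fun x => rho11 (secmap m x)) '' Lset = id '' Lset :=
        Set.image_congr (fun v hv => rho_sec hv)
      rw [this, Set.image_id]
    · rintro _ ⟨v1, hv1, rfl⟩ _ ⟨v2, hv2, rfl⟩ he
      rw [rho_sec hv1, rho_sec hv2] at he
      rw [he]
    · rintro _ ⟨v, hv, rfl⟩
      rw [rho_sec hv]
    · intro y hy
      exact rho_sec hy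

lemma pA_mem_Qm (m : ℕ) (hm : 1 ≤ m) : pA m ∈ Qm m := by
  have hm0 : (0:ℝ) < (m:ℝ) := by exact_mod_cast Nat.lt_of_lt_of_le Nat.zero_lt_one hm
  have hinv1 : 1/(m:ℝ) ≤ 1 := by rw [div_le_one hm0]; exact_mod_cast hm
  refine ⟨pA m, memL_A (by positivity) hinv1, ?_⟩
  have hmax : max (1 - (m:ℝ) * (1/(m:ℝ) + 0)) 0 = 0 := by
    rw [add_zero, mul_one_div, div_self (ne_of_gt hm0)]
    norm_num
  refine funext2 ?_ ?_
  · show 1/(m:ℝ) + max (1 - (m:ℝ) * (1/(m:ℝ) + 0)) 0 = 1/(m:ℝ)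
    rw [hmax]; ring
  · show 0 + max (1 - (m:ℝ) * (1/(m:ℝ) + 0)) 0 = 0
    rw [hmax]; ring

lemma Qm_horiz {m : ℕ} {c : ℝ} (hc : ![c, 0] ∈ Qm m) : 1 ≤ (m:ℝ) * c := by
  obtain ⟨v, hv, he⟩ := hc
  have hv1 : 0 ≤ v 1 := by rcases hv with ⟨_, h, _⟩ | ⟨h, _, _⟩ <;> simp [h]
  have he1 : v 1 + max (1 - (m:ℝ) * (v 0 + v 1)) 0 = 0 := congrFun he 1
  have he0 : v 0 + max (1 - (m:ℝ) * (v 0 + v 1)) 0 = c := congrFun he 0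
  have hmx : 0 ≤ max (1 - (m:ℝ) * (v 0 + v 1)) 0 := le_max_right _ _
  have h1 : v 1 = 0 := by linarith [le_antisymm (by linarith) hv1]
  have h2 : max (1 - (m:ℝ) * (v 0 + v 1)) 0 = 0 := by linarith
  have h3 : 1 - (m:ℝ) * (v 0 + v 1) ≤ 0 := by
    by_contra hcon
    push_neg at hcon
    rw [max_eq_left (le_of_lt hcon)] at h2
    linarith
  have h4 : v 0 = c := by linarith
  rw [h4, h1] at h3
  linarith

lemma Qm_inj : Function.Injective (fun k : ℕ => Qm (k + 1)) := by
  intro k l h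
  simp only at h
  have hk0 : (0:ℝ) < ((k+1:ℕ):ℝ) := by positivity
  have hl0 : (0:ℝ) < ((l+1:ℕ):ℝ) := by positivity
  have h1 : 1 ≤ ((k+1:ℕ):ℝ) * (1/((l+1:ℕ):ℝ)) := by
    apply Qm_horiz (m := k+1)
    rw [h]
    exact pA_mem_Qm (l+1) (Nat.le_add_left 1 l)
  have h2 : 1 ≤ ((l+1:ℕ):ℝ) * (1/((k+1:ℕ):ℝ)) := by
    apply Qm_horiz (m := l+1)
    rw [← h]
    exact pA_mem_Qm (k+1) (Nat.le_add_left 1 k)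
  rw [mul_one_div, le_div_iff₀ hl0, one_mul] at h1
  rw [mul_one_div, le_div_iff₀ hk0, one_mul] at h2
  have h3 : ((k+1:ℕ):ℝ) = ((l+1:ℕ):ℝ) := le_antisymm (by exact_mod_cast h2) (by exact_mod_cast h1)
  have h4 : (k+1 : ℕ) = (l+1 : ℕ) := by exact_mod_cast h3
  omega

lemma domains_infinite : {Q : Set (Fin 2 → ℝ) | IsZHomeoDomain rho11 Q}.Infinite :=
  Set.infinite_of_injective_forall_mem Qm_inj
    (fun k => Qm_domain (k+1) (Nat.le_add_left 1 k))

end Aux4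
section Aux5
open Set

lemma srm_mem {m : ℕ} (hm : 1 ≤ m) {x : Fin 2 → ℝ} (hx : x ∈ cubeSet 2) :
    secmap m (rho11 x) ∈ cubeSet 2 := sec_maps hm (rho_maps hx)

lemma eps_mem {m : ℕ} (hm : 1 ≤ m) (f : ↥(McN 2)) :
    (fun x : ↥(cubeSet 2) => f.1 ⟨secmap m (rho11 x.1), srm_mem hm x.2⟩) ∈ McN 2 := by
  refine ⟨fun x => f.2.1 _, ?_⟩
  obtain ⟨G, hG, hfg⟩ := f.2.2
  refine ⟨fun v => G (secmap m (rho11 v)), ?_, fun x => hfg _⟩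
  have h1 : IsZMapOn1 (cubeSet 2) (fun y => G (secmap m y)) :=
    zcomp1 hG (sec_zmap m _) (sec_maps hm)
  exact zcomp1 (g := fun y => G (secmap m y)) (h := rho11) h1 (rho_zmap _) rho_maps

noncomputable def epsm (m : ℕ) (hm : 1 ≤ m) : ↥(McN 2) → ↥(McN 2) :=
  fun f => ⟨fun x => f.1 ⟨secmap m (rho11 x.1), srm_mem hm x.2⟩, eps_mem hm f⟩

lemma epsm_retr (m : ℕ) (hm : 1 ≤ m) : IsMcNRetraction (epsm m hm) (retAlg rho11) := by
  refine ⟨fun f g h => rfl, fun f h => rfl, ?_, ?_⟩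
  · intro f
    apply Subtype.ext
    funext x
    show f.1 ⟨secmap m (rho11 (secmap m (rho11 x.1))), _⟩ = f.1 ⟨secmap m (rho11 x.1), _⟩
    have hfix : secmap m (rho11 (secmap m (rho11 x.1))) = secmap m (rho11 x.1) := by
      rw [rho_sec (rho_mem_L x.2)]
    exact congrArg f.1 (Subtype.ext hfix)
  · apply Set.Subset.antisymm
    · rintro _ ⟨F, ⟨f, rfl⟩, rfl⟩
      refine ⟨fun y : ↥(cubeSet 2) => f.1 ⟨secmap m y.1, sec_maps hm y.2⟩, ?_, ?_⟩
      · refine ⟨fun y => f.2.1 _, ?_⟩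
        obtain ⟨G, hG, hfg⟩ := f.2.2
        exact ⟨fun v => G (secmap m v), zcomp1 hG (sec_zmap m _) (sec_maps hm),
          fun y => hfg _⟩
      · intro x h
        rfl
    · intro F hF
      obtain ⟨g, hg, hgF⟩ := hF
      have hFmem : F ∈ McN 2 := by
        refine ⟨fun x => ?_, ?_⟩
        · rw [hgF x (rho_maps x.2)]; exact hg.1 _
        · obtain ⟨G, hG, hGg⟩ := hg.2
          refine ⟨fun v => G (rho11 v), zcomp1 hG (rho_zmap _) rho_maps, fun x => ?_⟩
          rw [hgF x (rho_maps x.2)]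
          exact hGg _
      have hfix : epsm m hm ⟨F, hFmem⟩ = ⟨F, hFmem⟩ := by
        apply Subtype.ext
        funext x
        show F ⟨secmap m (rho11 x.1), _⟩ = F x
        rw [hgF ⟨secmap m (rho11 x.1), srm_mem hm x.2⟩
            (rho_maps (srm_mem hm x.2)), hgF x (rho_maps x.2)]
        exact congrArg g (Subtype.ext (by simp only; rw [rho_sec (rho_mem_L x.2)]))
      exact ⟨⟨F, hFmem⟩, ⟨⟨F, hFmem⟩, hfix⟩, rfl⟩

noncomputable def coordFn : ↥(McN 2) :=
  ⟨fun x => x.1 1, fun x => (mem_cube_iff.1 x.2).2,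
    fun v => v 1, ⟨(continuous_apply 1).continuousOn, 1, fun _ v => v 1,
      fun _ => ⟨![0,1], 0, by intro x; norm_num [Fin.sum_univ_two]⟩,
      fun x _ => ⟨0, rfl⟩⟩, fun x => rfl⟩

lemma xa_memL {m' : ℕ} (hm' : 1 ≤ m') : ![1/((m':ℕ):ℝ), 0] ∈ Lset := by
  have hm0 : (0:ℝ) < (m':ℝ) := by exact_mod_cast Nat.lt_of_lt_of_le Nat.zero_lt_one hm'
  exact memL_A (by positivity) (by rw [div_le_one hm0]; exact_mod_cast hm')

lemma eps_eval (m m' : ℕ) (hm : 1 ≤ m) (hm' : 1 ≤ m') :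
    (epsm m hm coordFn).1 ⟨![1/((m':ℕ):ℝ), 0], L_sub_cube (xa_memL hm')⟩
      = max (1 - (m:ℝ) * (1/((m':ℕ):ℝ) + 0)) 0 := by
  show secmap m (rho11 ![1/((m':ℕ):ℝ), 0]) 1 = _
  rw [rho_fix (xa_memL hm')]
  show (0:ℝ) + max (1 - (m:ℝ) * (1/((m':ℕ):ℝ) + 0)) 0 = _
  rw [zero_add]

lemma eps_le {k l : ℕ}
    (h : epsm (k+1) (Nat.le_add_left 1 k) = epsm (l+1) (Nat.le_add_left 1 l)) :
    ((l:ℝ)+1) ≤ ((k:ℝ)+1) := by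
  have hl0 : (0:ℝ) < ((l+1:ℕ):ℝ) := by positivity
  have h1 : (epsm (k+1) (Nat.le_add_left 1 k) coordFn).1
        ⟨![1/((l+1:ℕ):ℝ), 0], L_sub_cube (xa_memL (Nat.le_add_left 1 l))⟩
      = (epsm (l+1) (Nat.le_add_left 1 l) coordFn).1
        ⟨![1/((l+1:ℕ):ℝ), 0], L_sub_cube (xa_memL (Nat.le_add_left 1 l))⟩ := by rw [h]
  rw [eps_eval (k+1) (l+1) (Nat.le_add_left 1 k) (Nat.le_add_left 1 l),
    eps_eval (l+1) (l+1) (Nat.le_add_left 1 l) (Nat.le_add_left 1 l)] at h1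
  have h2 : ((l+1:ℕ):ℝ) * (1/((l+1:ℕ):ℝ) + 0) = 1 := by
    rw [add_zero, mul_one_div, div_self (ne_of_gt hl0)]
  rw [h2] at h1
  norm_num at h1
  have hl0' : (0:ℝ) < (l:ℝ) + 1 := by positivity
  have h4 : ((l:ℝ)+1) * 1 ≤ ((l:ℝ)+1) * (((k:ℝ)+1) * ((l:ℝ)+1)⁻¹) :=
    mul_le_mul_of_nonneg_left h1 (le_of_lt hl0')
  have h5 : ((l:ℝ)+1) * (((k:ℝ)+1) * ((l:ℝ)+1)⁻¹) = (k:ℝ)+1 := by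
    field_simp
  linarith

lemma eps_inj : Function.Injective (fun k : ℕ => epsm (k+1) (Nat.le_add_left 1 k)) := by
  intro k l h
  simp only at h
  have h1 := eps_le h
  have h2 := eps_le h.symm
  have : (k:ℝ) = l := by linarith
  exact_mod_cast this

lemma retr_infinite :
    {ε : ↥(McN 2) → ↥(McN 2) | IsMcNRetraction ε (retAlg rho11)}.Infinite :=
  Set.infinite_of_injective_forall_mem eps_inj
    (fun k => epsm_retr (k+1) (Nat.le_add_left 1 k))

end Aux5

/-- `ρ` is a Z-retraction of `[0,1]²` with range `L`, it has infinitely many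
Z-homeomorphism domains, and consequently there are infinitely many retractions of
`McN([0,1]²)` onto `A_ρ`. -/
theorem stmt11 :
    IsZRetraction rho11 ∧ zRange rho11 = Lset ∧
    {Q : Set (Fin 2 → ℝ) | IsZHomeoDomain rho11 Q}.Infinite ∧
    {ε : ↥(McN 2) → ↥(McN 2) | IsMcNRetraction ε (retAlg rho11)}.Infinite := by
  refine ⟨⟨rho_zmap _, rho_maps, fun x hx => rho_fix (rho_mem_L hx)⟩,
    zRange_rho, domains_infinite, retr_infinite⟩
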